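/- Let X and Y be real normed spaces, F : X → Y any map, K ⊆ X, R : Y → X any map, and δ > 0. Then for all f₁, f₂ ∈ K with ‖F(f₁) − F(f₂)‖_Y ≤ 2δ, there exist f ∈ {f₁, f₂} and g ∈ Y with ‖F(f) − g‖_Y ≤ δ and ‖f − R(g)‖_X ≥ (1/2) ‖f₁ − f₂‖_X. Consequently, the worst-case error of R satisfies sup{ ‖f − R(g)‖_X : f ∈ K, g ∈ Y, ‖F(f) − g‖_Y ≤ δ } ≥ (1/2) ω(2δ, K), where ω(δ, K) := sup{ ‖f₁ − f₂‖_X : f₁, f₂ ∈ K, ‖F(f₁) − F(f₂)‖_Y ≤ δ } is the modulus of continuity of (F|_K)^{−1} (suprema taken in [0, ∞]). -/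
import Mathlib


open scoped ENNReal

private lemma key_aux {X Y : Type*} [NormedAddCommGroup X] [NormedSpace ℝ X]
    [NormedAddCommGroup Y] [NormedSpace ℝ Y]
    (F : X → Y) (R : Y → X) (δ : ℝ)
    (f₁ f₂ : X) (h : ‖F f₁ - F f₂‖ ≤ 2 * δ) :
    ∃ f ∈ ({f₁, f₂} : Set X), ∃ g : Y,
      ‖F f - g‖ ≤ δ ∧ (1 / 2) * ‖f₁ - f₂‖ ≤ ‖f - R g‖ := by
  set g : Y := (2⁻¹ : ℝ) • (F f₁ + F f₂) with hg
  have h1 : ‖F f₁ - g‖ ≤ δ := by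
    have : F f₁ - g = (2⁻¹ : ℝ) • (F f₁ - F f₂) := by
      rw [hg]; module
    rw [this, norm_smul]
    simp only [norm_inv, Real.norm_ofNat]
    nlinarith [norm_nonneg (F f₁ - F f₂)]
  have h2 : ‖F f₂ - g‖ ≤ δ := by
    have : F f₂ - g = (2⁻¹ : ℝ) • (F f₂ - F f₁) := by
      rw [hg]; module
    rw [this, norm_smul, norm_sub_rev]
    simp only [norm_inv, Real.norm_ofNat]
    nlinarith [norm_nonneg (F f₁ - F f₂)]
  have htri : ‖f₁ - f₂‖ ≤ ‖f₁ - R g‖ + ‖f₂ - R g‖ := by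
    have := norm_sub_le_norm_sub_add_norm_sub f₁ (R g) f₂
    calc ‖f₁ - f₂‖ ≤ ‖f₁ - R g‖ + ‖R g - f₂‖ := norm_sub_le_norm_sub_add_norm_sub _ _ _
      _ = ‖f₁ - R g‖ + ‖f₂ - R g‖ := by rw [norm_sub_rev (R g)]
  rcases le_total ((1/2) * ‖f₁ - f₂‖) ‖f₁ - R g‖ with hc | hc
  · exact ⟨f₁, Or.inl rfl, g, h1, hc⟩
  · refine ⟨f₂, Or.inr rfl, g, h2, by linarith⟩

/-- Lemma 3.8: for any reconstruction method `R`, for `f₁, f₂ ∈ K` with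
`‖F(f₁) − F(f₂)‖ ≤ 2δ` one of `f₁, f₂` together with some data `g` at noise level `δ` realizes
an error `≥ (1/2)‖f₁ − f₂‖`; consequently the worst-case error of `R` on `K` at noise level `δ`
is bounded below by half the modulus of continuity `ω(2δ, K)` (suprema taken in `[0,∞]`). -/
theorem stmt_13 {X Y : Type*} [NormedAddCommGroup X] [NormedSpace ℝ X]
    [NormedAddCommGroup Y] [NormedSpace ℝ Y]
    (F : X → Y) (K : Set X) (R : Y → X) (δ : ℝ) (hδ : 0 < δ) :
    (∀ f₁ ∈ K, ∀ f₂ ∈ K, ‖F f₁ - F f₂‖ ≤ 2 * δ →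
      ∃ f ∈ ({f₁, f₂} : Set X), ∃ g : Y,
        ‖F f - g‖ ≤ δ ∧ (1 / 2) * ‖f₁ - f₂‖ ≤ ‖f - R g‖) ∧
    (1 / 2 : ℝ≥0∞) *
        sSup {x : ℝ≥0∞ | ∃ f₁ ∈ K, ∃ f₂ ∈ K,
          ‖F f₁ - F f₂‖ ≤ 2 * δ ∧ x = ENNReal.ofReal ‖f₁ - f₂‖} ≤
      sSup {x : ℝ≥0∞ | ∃ f ∈ K, ∃ g : Y,
          ‖F f - g‖ ≤ δ ∧ x = ENNReal.ofReal ‖f - R g‖} := by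
  constructor
  · exact fun f₁ _ f₂ _ h => key_aux F R δ f₁ f₂ h
  · rw [ENNReal.mul_sSup]
    apply iSup₂_le
    rintro x ⟨f₁, hf₁, f₂, hf₂, hle, rfl⟩
    obtain ⟨f, hf, g, hg, hge⟩ := key_aux F R δ f₁ f₂ hle
    have hfK : f ∈ K := by rcases hf with rfl | rfl <;> assumption
    calc (1 / 2 : ℝ≥0∞) * ENNReal.ofReal ‖f₁ - f₂‖
        = ENNReal.ofReal ((1/2) * ‖f₁ - f₂‖) := by
          rw [ENNReal.ofReal_mul (by norm_num)]
          congr 1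
          rw [ENNReal.ofReal_div_of_pos (by norm_num)]
          simp
      _ ≤ ENNReal.ofReal ‖f - R g‖ := ENNReal.ofReal_le_ofReal hge
      _ ≤ sSup {x : ℝ≥0∞ | ∃ f ∈ K, ∃ g : Y,
          ‖F f - g‖ ≤ δ ∧ x = ENNReal.ofReal ‖f - R g‖} :=
        le_sSup (Set.mem_setOf.mpr ⟨f, hfK, g, hg, rfl⟩)
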